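/- (Locality of per-agent value functions: neighbourhood growth with planning horizon.) Let I be a finite index set, for each i ∈ I let S_i be a nonempty finite type, and let S = Π_{i∈I} S_i. Let N : I → Finset I be a neighbourhood map with i ∈ N(i) for all i, and define iterated neighbourhoods by N^0(i) = {i} and N^{k+1}(i) = ⋃_{j∈N^k(i)} N(j). Fix a horizon H ≥ 1; for each 0 ≤ t ≤ H−1 and i ∈ I let r_i^t : S_i → ℝ and let Q_i^t : S → (S_i → ℝ) be a kernel with Q_i^t(s) a probability mass function on S_i for all s ∈ S. Assume each kernel is local: for all s, s̄ ∈ S, if s_j = s̄_j for all j ∈ N(i) then Q_i^t(s) = Q_i^t(s̄). Define per-agent value functions V_i^t : S → ℝ by V_i^{H−1}(s) = r_i^{H−1}(s_i) and V_i^t(s) = r_i^t(s_i) + Σ_{s'∈S} (Π_{j∈I} Q_j^t(s)(s'_j)) · V_i^{t+1}(s') for 0 ≤ t < H−1. Then for every t and i, V_i^t depends only on the states of intersections in the (H−1−t)-fold iterated neighbourhood of i: for all s, s̄ ∈ S, if s_j = s̄_j for all j ∈ N^{H−1−t}(i), then V_i^t(s) = V_i^t(s̄). -/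
import Mathlib


/-- Iterated neighbourhoods: `iterNbhd N 0 i = {i}` and
`iterNbhd N (k+1) i = ⋃_{j ∈ iterNbhd N k i} N j`. -/
def iterNbhd {I : Type*} [DecidableEq I] (N : I → Finset I) : ℕ → I → Finset I
  | 0, i => {i}
  | k + 1, i => (iterNbhd N k i).biUnion N

/-- Marginalization: if `f` depends only on coordinates in `A` and the kernels
`p`, `q` are pmfs agreeing on `A`, then the weighted sums agree. -/
lemma sum_prod_mul_congr {I : Type*} [Fintype I] [DecidableEq I]
    (S : I → Type*) [∀ i, Fintype (S i)] [∀ i, Nonempty (S i)]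
    (A : Finset I) (p q : ∀ j, S j → ℝ)
    (hpq : ∀ j ∈ A, p j = q j)
    (hp : ∀ j, ∑ x : S j, p j x = 1) (hq : ∀ j, ∑ x : S j, q j x = 1)
    (f : (∀ j, S j) → ℝ) (hf : ∀ s sb : ∀ j, S j, (∀ j ∈ A, s j = sb j) → f s = f sb) :
    ∑ s' : ∀ j, S j, (∏ j, p j (s' j)) * f s' =
      ∑ s' : ∀ j, S j, (∏ j, q j (s' j)) * f s' := by
  classical
  have key : ∀ (p : ∀ j, S j → ℝ), (∀ j, ∑ x : S j, p j x = 1) →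
      ∑ s' : ∀ j, S j, (∏ j, p j (s' j)) * f s' =
      ∑ a : ∀ j : {j // j ∈ A}, S (j : I),
        (∏ j : {j // j ∈ A}, p j (a j)) *
          f (fun j => if h : j ∈ A then a ⟨j, h⟩ else Classical.arbitrary (S j)) := by
    intro p hp
    set e := Equiv.piEquivPiSubtypeProd (fun j => j ∈ A) S with he
    rw [← Equiv.sum_comp e.symm, Fintype.sum_prod_type]
    refine Finset.sum_congr rfl fun a _ => ?_
    have hcoord : ∀ (b : ∀ j : {j // ¬ j ∈ A}, S (j : I)) (j : I),
        e.symm (a, b) j = if h : j ∈ A then a ⟨j, h⟩ else b ⟨j, by simpa using h⟩ := by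
      intro b j
      simp [he, Equiv.piEquivPiSubtypeProd_symm_apply]
    have hfb : ∀ b, f (e.symm (a, b)) =
        f (fun j => if h : j ∈ A then a ⟨j, h⟩ else Classical.arbitrary (S j)) := by
      intro b
      apply hf
      intro j hj
      rw [hcoord]
      simp [hj]
    have hprod : ∀ b, (∏ j, p j (e.symm (a, b) j)) =
        (∏ j : {j // j ∈ A}, p j (a j)) * ∏ j : {j // ¬ j ∈ A}, p j (b j) := by
      intro b
      rw [← Fintype.prod_subtype_mul_prod_subtype (fun j => j ∈ A)
        (fun j => p j (e.symm (a, b) j))]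
      congr 1
      · refine Finset.prod_congr (by congr!) fun j _ => ?_
        rw [hcoord b j]; simp [j.2]
      · refine Finset.prod_congr (by congr!) fun j _ => ?_
        rw [hcoord b j]; simp [j.2]
    calc ∑ b, (∏ j, p j (e.symm (a, b) j)) * f (e.symm (a, b))
        = ∑ b : ∀ j : {j // ¬ j ∈ A}, S (j : I),
            ((∏ j : {j // j ∈ A}, p j (a j)) *
              f (fun j => if h : j ∈ A then a ⟨j, h⟩ else Classical.arbitrary (S j))) *
            ∏ j : {j // ¬ j ∈ A}, p j (b j) := by
          refine Finset.sum_congr rfl fun b _ => ?_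
          rw [hprod, hfb]; ring
      _ = _ := by
          rw [← Finset.mul_sum, ← Fintype.prod_sum]
          simp [hp]
  rw [key p hp, key q hq]
  refine Finset.sum_congr rfl fun a _ => ?_
  congr 1
  exact Finset.prod_congr rfl fun j _ => by rw [hpq j j.2]

lemma mem_iterNbhd_self {I : Type*} [DecidableEq I] (N : I → Finset I)
    (hNrefl : ∀ i, i ∈ N i) : ∀ k i, i ∈ iterNbhd N k i := by
  intro k
  induction k with
  | zero => intro i; simp [iterNbhd]
  | succ k ih => intro i; exact Finset.mem_biUnion.mpr ⟨i, ih i, hNrefl i⟩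

/-- Locality of per-agent value functions.  If each local kernel
depends only on the states of the agent's neighbours, then the per-agent value
function at time `t` depends only on the states of intersections in the
`(H-1-t)`-fold iterated neighbourhood of the agent. -/
theorem decMDP_value_locality
    {I : Type*} [Fintype I] [DecidableEq I]
    (S : I → Type*) [∀ i, Fintype (S i)] [∀ i, Nonempty (S i)]
    (N : I → Finset I) (hNrefl : ∀ i, i ∈ N i)
    (H : ℕ) (hH : 1 ≤ H)
    (r : ℕ → ∀ i, S i → ℝ)
    (Q : ℕ → ∀ i : I, (∀ j, S j) → S i → ℝ)
    (hQnonneg : ∀ t, t ≤ H - 1 → ∀ i, ∀ s : ∀ j, S j, ∀ x : S i, 0 ≤ Q t i s x)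
    (hQsum : ∀ t, t ≤ H - 1 → ∀ i, ∀ s : ∀ j, S j, ∑ x : S i, Q t i s x = 1)
    (hQlocal : ∀ t i, ∀ s sb : ∀ j, S j,
      (∀ j ∈ N i, s j = sb j) → Q t i s = Q t i sb)
    (Vag : ℕ → I → (∀ j, S j) → ℝ)
    (hVaglast : ∀ i, ∀ s : ∀ j, S j, Vag (H - 1) i s = r (H - 1) i (s i))
    (hVagstep : ∀ t, t < H - 1 → ∀ i, ∀ s : ∀ j, S j,
      Vag t i s = r t i (s i) +
        ∑ s' : ∀ j, S j, (∏ j, Q t j s (s' j)) * Vag (t + 1) i s') :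
    ∀ t, t ≤ H - 1 → ∀ i, ∀ s sb : ∀ j, S j,
      (∀ j ∈ iterNbhd N (H - 1 - t) i, s j = sb j) → Vag t i s = Vag t i sb := by
  have main : ∀ k t, t ≤ H - 1 → H - 1 - t = k → ∀ i, ∀ s sb : ∀ j, S j,
      (∀ j ∈ iterNbhd N k i, s j = sb j) → Vag t i s = Vag t i sb := by
    intro k
    induction k with
    | zero =>
      intro t ht hk i s sb hss
      have : t = H - 1 := by omega
      subst this
      rw [hVaglast, hVaglast, hss i (mem_iterNbhd_self N hNrefl 0 i)]
    | succ k ih =>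
      intro t ht hk i s sb hss
      have htlt : t < H - 1 := by omega
      rw [hVagstep t htlt i s, hVagstep t htlt i sb,
        hss i (mem_iterNbhd_self N hNrefl (k + 1) i)]
      congr 1
      refine sum_prod_mul_congr S (iterNbhd N k i) (fun j => Q t j s) (fun j => Q t j sb)
        ?_ (fun j => hQsum t ht j s) (fun j => hQsum t ht j sb) (Vag (t + 1) i) ?_
      · intro j hj
        refine hQlocal t j s sb fun l hl => ?_
        exact hss l (Finset.mem_biUnion.mpr ⟨j, hj, hl⟩)
      · intro u ub hu
        exact ih (t + 1) (by omega) (by omega) i u ub hu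
  intro t ht i s sb hss
  exact main (H - 1 - t) t ht rfl i s sb hss
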